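/- Assume Dickson's conjecture. Let H ≥ 5 be an integer. Then there exist Sophie Germain primes p_1, p_2, …, p_H such that: (i) p_1 > 4H + 1 and p_{h+1} > 3·p_h·(2p_h+1)^3 for all h in [1, H−1]; (ii) for all h in [1, H] and all primes p with 5 ≤ p ≤ H, gcd(2h + p_h, p) = 1 and gcd(2h + p_h(2p_h+1)^3, p) = 1; (iii) for all h, k in [1, H] with h ≠ k, gcd(p_h − 2(k−h), p_k(2p_k+1)) = 1 and gcd(p_h(2p_h+1)^3 − 2(k−h), p_k(2p_k+1)) = 1. -/

import Mathlib

/-- Dickson's conjecture: given finitely many linear polynomials `t ↦ a i * t + b i`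
with integer coefficients and positive leading coefficients, such that no prime divides
the value of their product at every integer, there are infinitely many positive integers
`t` at which all of them take prime values. -/
def DicksonConjecture : Prop :=
  ∀ (s : ℕ) (a b : Fin s → ℤ),
    (∀ i, 0 < a i) →
    (∀ p : ℕ, p.Prime → ∃ t : ℤ, ¬ ((p : ℤ) ∣ ∏ i, (a i * t + b i))) →
    {t : ℕ | 0 < t ∧ ∀ i, ∃ q : ℕ, q.Prime ∧ a i * (t : ℤ) + b i = q}.Infinite


lemma good_residue {q : ℕ} (hq : q.Prime) (hq5 : 5 ≤ q) (c : ZMod q) :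
    ∃ r : ZMod q, r ≠ 0 ∧ 2*r+1 ≠ 0 ∧ r + c ≠ 0 ∧ r*(2*r+1)^3 + c ≠ 0 := by
  haveI : Fact q.Prime := ⟨hq⟩
  rcases lt_or_ge q 11 with hlt | hge
  · interval_cases q
    · revert c; decide
    · exact absurd hq (by decide)
    · revert c; decide
    · exact absurd hq (by decide)
    · exact absurd hq (by decide)
    · exact absurd hq (by decide)
  · -- counting argument
    have h2 : (2 : ZMod q) ≠ 0 := by
      have := (ZMod.natCast_eq_zero_iff 2 q).not
      simp only [Nat.cast_ofNat] at this
      exact this.mpr (fun hdvd => by have := Nat.le_of_dvd (by norm_num) hdvd; omega)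
    have h8 : (8 : ZMod q) ≠ 0 := by
      have := (ZMod.natCast_eq_zero_iff 8 q).not
      simp only [Nat.cast_ofNat] at this
      exact this.mpr (fun hdvd => by have := Nat.le_of_dvd (by norm_num) hdvd; omega)
    set P : Polynomial (ZMod q) :=
      Polynomial.C 8 * Polynomial.X^4 + Polynomial.C 12 * Polynomial.X^3 +
      Polynomial.C 6 * Polynomial.X^2 + Polynomial.X + Polynomial.C c with hP
    have hPdeg : P.natDegree = 4 := by
      rw [hP]; compute_degree!
    have hPne : P ≠ 0 := by
      intro h0
      rw [h0] at hPdeg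
      simp at hPdeg
    have hPeval : ∀ x : ZMod q, P.eval x = x*(2*x+1)^3 + c := by
      intro x; simp [hP]; ring
    set B : Finset (ZMod q) :=
      insert (0 : ZMod q) (insert (-(2⁻¹ : ZMod q)) (insert (-c) P.roots.toFinset)) with hB
    have hBcard : B.card ≤ 7 := by
      have h1 : P.roots.toFinset.card ≤ 4 := by
        calc P.roots.toFinset.card ≤ P.roots.card := Multiset.toFinset_card_le _
        _ ≤ P.natDegree := Polynomial.card_roots' P
        _ = 4 := hPdeg
      have a1 := Finset.card_insert_le (-c) P.roots.toFinset
      have a2 := Finset.card_insert_le (-(2⁻¹:ZMod q)) (insert (-c) P.roots.toFinset)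
      have a3 := Finset.card_insert_le (0:ZMod q)
        (insert (-(2⁻¹:ZMod q)) (insert (-c) P.roots.toFinset))
      rw [hB]; omega
    have hcard : B.card < Fintype.card (ZMod q) := by
      rw [ZMod.card]; omega
    have hex : ∃ r, r ∉ B := by
      by_contra hcon
      push_neg at hcon
      have : B = Finset.univ := Finset.eq_univ_iff_forall.mpr hcon
      rw [this, Finset.card_univ] at hcard
      exact lt_irrefl _ hcard
    obtain ⟨r, hr⟩ := hex
    rw [hB] at hr
    simp only [Finset.mem_insert, Multiset.mem_toFinset, not_or] at hr
    obtain ⟨hr0, hrinv, hrc, hroot⟩ := hr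
    refine ⟨r, hr0, ?_, ?_, ?_⟩
    · intro h
      apply hrinv
      field_simp
      linear_combination h
    · intro h
      apply hrc
      linear_combination h
    · intro h
      apply hroot
      rw [Polynomial.mem_roots hPne, Polynomial.IsRoot, hPeval]
      exact h


-- helper lemmas
lemma not_dvd_of_lt' {ℓ v : ℕ} (h0 : 0 < v) (h1 : v < ℓ) : ¬ ℓ ∣ v :=
  fun hd => absurd (Nat.le_of_dvd h0 hd) (by omega)

lemma int_gcd_prime_mul {x y : ℕ} (hx : x.Prime) (hy : y.Prime) (a : ℤ)
    (h1 : ¬ (x:ℤ) ∣ a) (h2 : ¬ (y:ℤ) ∣ a) : Int.gcd a ((x:ℤ) * (y:ℤ)) = 1 := by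
  have hxy : ((x:ℤ) * (y:ℤ)).natAbs = x * y := by
    rw [Int.natAbs_mul, Int.natAbs_natCast, Int.natAbs_natCast]
  show Nat.gcd a.natAbs ((x:ℤ) * (y:ℤ)).natAbs = 1
  rw [hxy]
  have c1 : Nat.Coprime a.natAbs x :=
    ((hx.coprime_iff_not_dvd).mpr (fun hd => h1 (Int.natCast_dvd.mpr hd))).symm
  have c2 : Nat.Coprime a.natAbs y :=
    ((hy.coprime_iff_not_dvd).mpr (fun hd => h2 (Int.natCast_dvd.mpr hd))).symm
  exact Nat.Coprime.mul_right c1 c2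

lemma grow_mono {p : ℕ → ℕ} {n : ℕ}
    (grow : ∀ h, 1 ≤ h → h + 1 ≤ n → 3 * p h * (2 * p h + 1)^3 < p (h+1)) :
    ∀ j k, 1 ≤ j → j ≤ k → k ≤ n → p j ≤ p k := by
  intro j k hj hjk hk
  induction k with
  | zero => exact absurd hjk (by omega)
  | succ m ih =>
    rcases Nat.eq_or_lt_of_le hjk with he | hl
    · rw [he]
    · have h1 : p j ≤ p m := ih (by omega) (by omega)
      have hX : 1 ≤ (2*p m+1)^3 := Nat.one_le_pow _ _ (by omega)
      have h2 : p m ≤ 3 * p m * (2 * p m + 1)^3 := by nlinarith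
      have h3 := grow m (by omega) hk
      omega

lemma grow_gap {p : ℕ → ℕ} {n : ℕ}
    (grow : ∀ h, 1 ≤ h → h + 1 ≤ n → 3 * p h * (2 * p h + 1)^3 < p (h+1)) :
    ∀ j k, 1 ≤ j → j < k → k ≤ n → 3 * p j * (2 * p j + 1)^3 < p k :=
  fun j k hj hjk hk =>
    lt_of_lt_of_le (grow j hj (by omega)) (grow_mono grow (j+1) k (by omega) hjk hk)

lemma dickson_step (hD : DicksonConjecture) (M r N : ℕ) (hM : 0 < M)
    (hcop : ∀ ℓ : ℕ, ℓ.Prime → ℓ ∣ M → ¬ ℓ ∣ r * (2*r+1)) :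
    ∃ p : ℕ, N < p ∧ p.Prime ∧ (2*p+1).Prime ∧ p ≡ r [MOD M] := by
  set a : Fin 2 → ℤ := ![(M : ℤ), 2*M] with ha
  set b : Fin 2 → ℤ := ![(r : ℤ), 2*r+1] with hb
  have hapos : ∀ i, 0 < a i := by
    intro i
    fin_cases i <;> simp [ha] <;> positivity
  have hfix : ∀ p : ℕ, p.Prime → ∃ t : ℤ, ¬ ((p : ℤ) ∣ ∏ i, (a i * t + b i)) := by
    intro ℓ hℓ
    haveI : Fact ℓ.Prime := ⟨hℓ⟩
    have hprod : ∀ t : ℤ, (∏ i, (a i * t + b i)) = ((M:ℤ)*t + r) * (2*((M:ℤ)*t + r) + 1) := by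
      intro t
      rw [Fin.prod_univ_two]
      simp only [ha, hb, Matrix.cons_val_zero, Matrix.cons_val_one, Matrix.head_cons]
      ring
    by_cases hdvd : ℓ ∣ M
    · refine ⟨0, ?_⟩
      rw [hprod]
      intro hcon
      apply hcop ℓ hℓ hdvd
      rw [show ((M:ℤ)*0 + r) * (2*((M:ℤ)*0 + r) + 1) = ((r * (2*r+1) : ℕ) : ℤ) by
        push_cast; ring] at hcon
      exact_mod_cast hcon
    · -- ℓ does not divide M : M is a unit mod ℓ
      have hMne : (M : ZMod ℓ) ≠ 0 := by
        rw [Ne, ZMod.natCast_eq_zero_iff]; exact hdvd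
      have key : ∃ u : ZMod ℓ, ((M:ZMod ℓ)*u + r) * (2*((M:ZMod ℓ)*u + r) + 1) ≠ 0 := by
        rcases eq_or_ne ℓ 2 with rfl | hne2
        · refine ⟨(1 - (r : ZMod 2)) * (M : ZMod 2)⁻¹, ?_⟩
          have hMu : (M : ZMod 2) * ((1 - (r:ZMod 2)) * (M : ZMod 2)⁻¹) + r = 1 := by
            field_simp
            ring
          rw [hMu]
          have h20 : (2 : ZMod 2) = 0 := rfl
          rw [h20]
          norm_num
        · have hcard : 2 < Fintype.card (ZMod ℓ) := by
            rw [ZMod.card]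
            have := hℓ.two_le
            omega
          have h2 : (2 : ZMod ℓ) ≠ 0 := by
            have : ((2:ℕ) : ZMod ℓ) ≠ 0 := by
              rw [Ne, ZMod.natCast_eq_zero_iff]
              intro hdvd2
              exact hne2 ((Nat.prime_dvd_prime_iff_eq hℓ Nat.prime_two).mp hdvd2)
            exact_mod_cast this
          set u0 : ZMod ℓ := (-(r:ZMod ℓ)) * (M : ZMod ℓ)⁻¹ with hu0
          set u1 : ZMod ℓ := (-(2⁻¹:ZMod ℓ) - r) * (M : ZMod ℓ)⁻¹ with hu1
          have hex : ∃ u : ZMod ℓ, u ∉ ({u0, u1} : Finset (ZMod ℓ)) := by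
            by_contra hcon
            push_neg at hcon
            have heq : ({u0, u1} : Finset (ZMod ℓ)) = Finset.univ :=
              Finset.eq_univ_iff_forall.mpr hcon
            have : Fintype.card (ZMod ℓ) ≤ 2 := by
              rw [← Finset.card_univ, ← heq]
              exact (Finset.card_insert_le _ _).trans (by simp)
            omega
          obtain ⟨u, hu⟩ := hex
          simp only [Finset.mem_insert, Finset.mem_singleton, not_or] at hu
          refine ⟨u, ?_⟩
          intro hcon
          rcases mul_eq_zero.mp hcon with h | h
          · apply hu.1
            have h0' : (M:ZMod ℓ) * u0 = -r := by
              rw [hu0]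
              field_simp
              try ring
            apply mul_left_cancel₀ hMne
            rw [h0']
            linear_combination h
          · apply hu.2
            have hMu1 : (2:ZMod ℓ) * ((M:ZMod ℓ) * u1) = -1 - 2*r := by
              rw [hu1]
              field_simp
              try ring
            apply mul_left_cancel₀ hMne
            apply mul_left_cancel₀ h2
            rw [hMu1]
            linear_combination h
      obtain ⟨u, hu⟩ := key
      refine ⟨(u.val : ℤ), ?_⟩
      rw [hprod]
      intro hcon
      apply hu
      have h0 : ((((M:ℤ) * u.val + r) * (2*((M:ℤ)*u.val + r) + 1) : ℤ) : ZMod ℓ) = 0 :=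
        (ZMod.intCast_zmod_eq_zero_iff_dvd _ ℓ).mpr hcon
      push_cast at h0
      simp only [ZMod.natCast_val, ZMod.cast_id] at h0
      linear_combination h0
  have hinf := hD 2 a b hapos hfix
  obtain ⟨t, ht, htN⟩ := hinf.exists_gt N
  obtain ⟨htpos, hprime⟩ := ht
  obtain ⟨q0, hq0, he0⟩ := hprime 0
  obtain ⟨q1, hq1, he1⟩ := hprime 1
  simp only [ha, hb, Matrix.cons_val_zero, Matrix.cons_val_one, Matrix.head_cons] at he0 he1
  have hp0 : (M * t + r : ℕ) = q0 := by exact_mod_cast he0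
  have hp1 : (2*(M * t + r) + 1 : ℕ) = q1 := by
    have : ((2*(M*t+r)+1 : ℕ) : ℤ) = (q1 : ℤ) := by push_cast; linarith
    exact_mod_cast this
  refine ⟨M * t + r, ?_, hp0 ▸ hq0, hp1 ▸ hq1, ?_⟩
  · calc N < t := htN
      _ ≤ M * t := Nat.le_mul_of_pos_left t hM
      _ ≤ M * t + r := Nat.le_add_right _ _
  · show (M * t + r) % M = r % M
    rw [Nat.mul_add_mod]

def GermInv (H : ℕ) (n : ℕ) (p : ℕ → ℕ) : Prop :=
  (∀ h, 1 ≤ h → h ≤ n → (p h).Prime ∧ (2 * p h + 1).Prime) ∧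
  (1 ≤ n → 4 * H + 1 < p 1) ∧
  (∀ h, 1 ≤ h → h + 1 ≤ n → 3 * p h * (2 * p h + 1) ^ 3 < p (h + 1)) ∧
  (∀ h, 1 ≤ h → h ≤ n → ∀ q : ℕ, q.Prime → 5 ≤ q → q ≤ H →
    ¬ q ∣ (2 * h + p h) ∧ ¬ q ∣ (2 * h + p h * (2 * p h + 1) ^ 3)) ∧
  (∀ h k, 1 ≤ h → h ≤ n → 1 ≤ k → k ≤ n → h ≠ k →
    Int.gcd ((p h : ℤ) - 2 * ((k : ℤ) - (h : ℤ))) ((p k : ℤ) * (2 * (p k : ℤ) + 1)) = 1 ∧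
    Int.gcd ((p h : ℤ) * (2 * (p h : ℤ) + 1) ^ 3 - 2 * ((k : ℤ) - (h : ℤ)))
      ((p k : ℤ) * (2 * (p k : ℤ) + 1)) = 1)

lemma inv_step (hD : DicksonConjecture) (H n : ℕ) (hH : 5 ≤ H) (hn1 : n + 1 ≤ H)
    (p : ℕ → ℕ) (hp : GermInv H n p) : ∃ p' : ℕ → ℕ, GermInv H (n+1) p' := by
  obtain ⟨hSG, hp1, hgrow, hii, hiii⟩ := hp
  have hmono := grow_mono hgrow
  have hgap := grow_gap hgrow
  have hbig : ∀ k, 1 ≤ k → k ≤ n → 4*H+1 < p k := by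
    intro k h1 h2
    exact lt_of_lt_of_le (hp1 (by omega)) (hmono 1 k (by omega) h1 h2)
  have hpos : ∀ k, 1 ≤ k → k ≤ n → 1 ≤ p k := by
    intro k h1 h2
    have := hbig k h1 h2; omega
  have hplt : ∀ j k, 1 ≤ j → j < k → k ≤ n → p j < p k := by
    intro j k h1 h2 h3
    have hX : 1 ≤ (2*p j+1)^3 := Nat.one_le_pow _ _ (by omega)
    have := hgap j k h1 h2 h3
    nlinarith
  have h2plt : ∀ j k, 1 ≤ j → j < k → k ≤ n → 2 * p j + 1 < p k := by
    intro j k h1 h2 h3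
    have hgj := hgap j k h1 h2 h3
    have hpj := hpos j h1 (by omega)
    have hX : (2*p j+1) ≤ (2*p j+1)^3 := Nat.le_self_pow (by omega) _
    nlinarith
  -- distinctness facts
  have huniq1 : ∀ j k, 1 ≤ j → j ≤ n → 1 ≤ k → k ≤ n → p j = p k → j = k := by
    intro j k hj1 hj2 hk1 hk2 he
    rcases lt_trichotomy j k with h | h | h
    · exact absurd he (by have := hplt j k hj1 h hk2; omega)
    · exact h
    · exact absurd he (by have := hplt k j hk1 h hj2; omega)
  have huniq2 : ∀ j k, 1 ≤ j → j ≤ n → 1 ≤ k → k ≤ n → p j ≠ 2 * p k + 1 := by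
    intro j k hj1 hj2 hk1 hk2
    rcases le_or_gt j k with h | h
    · have := hmono j k hj1 h hk2; omega
    · have := h2plt k j hk1 h hj2; omega
  -- the finite set of moduli
  set S1 : Finset ℕ := (Finset.Icc 5 H).filter Nat.Prime with hS1
  set S2 : Finset ℕ := (Finset.Icc 1 n).image p with hS2
  set S3 : Finset ℕ := (Finset.Icc 1 n).image (fun k => 2 * p k + 1) with hS3
  set S : Finset ℕ := S1 ∪ S2 ∪ S3 with hS
  have hmemS : ∀ ℓ, ℓ ∈ S ↔ ((ℓ.Prime ∧ 5 ≤ ℓ ∧ ℓ ≤ H) ∨ (∃ k, 1 ≤ k ∧ k ≤ n ∧ p k = ℓ)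
      ∨ (∃ k, 1 ≤ k ∧ k ≤ n ∧ 2 * p k + 1 = ℓ)) := by
    intro ℓ
    simp only [hS, hS1, hS2, hS3, Finset.mem_union, Finset.mem_filter, Finset.mem_image,
      Finset.mem_Icc]
    constructor
    · rintro ((⟨⟨h2, h3⟩, h1⟩ | ⟨k, ⟨hk1, hk2⟩, hk3⟩) | ⟨k, ⟨hk1, hk2⟩, hk3⟩)
      · exact Or.inl ⟨h1, h2, h3⟩
      · exact Or.inr (Or.inl ⟨k, hk1, hk2, hk3⟩)
      · exact Or.inr (Or.inr ⟨k, hk1, hk2, hk3⟩)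
    · rintro (⟨h1, h2, h3⟩ | ⟨k, hk1, hk2, hk3⟩ | ⟨k, hk1, hk2, hk3⟩)
      · exact Or.inl (Or.inl ⟨⟨h2, h3⟩, h1⟩)
      · exact Or.inl (Or.inr ⟨k, ⟨hk1, hk2⟩, hk3⟩)
      · exact Or.inr ⟨k, ⟨hk1, hk2⟩, hk3⟩
  have hSprime : ∀ ℓ ∈ S, ℓ.Prime := by
    intro ℓ hℓ
    rcases (hmemS ℓ).mp hℓ with ⟨h1, _, _⟩ | ⟨k, hk1, hk2, hk3⟩ | ⟨k, hk1, hk2, hk3⟩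
    · exact h1
    · exact hk3 ▸ (hSG k hk1 hk2).1
    · exact hk3 ▸ (hSG k hk1 hk2).2
  have hS5 : ∀ ℓ ∈ S, 5 ≤ ℓ := by
    intro ℓ hℓ
    rcases (hmemS ℓ).mp hℓ with ⟨_, h2, _⟩ | ⟨k, hk1, hk2, hk3⟩ | ⟨k, hk1, hk2, hk3⟩
    · exact h2
    · have := hbig k hk1 hk2; omega
    · have := hbig k hk1 hk2; omega
  -- existence of good residues for each modulus
  have hGood : ∀ ℓ ∈ S, ∃ v : ℕ,
      (¬ ℓ ∣ v) ∧ (¬ ℓ ∣ (2*v+1)) ∧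
      (ℓ ≤ H → ¬ ℓ ∣ (2*(n+1) + v) ∧ ¬ ℓ ∣ (2*(n+1) + v*(2*v+1)^3)) ∧
      (∀ k, 1 ≤ k → k ≤ n → (ℓ = p k ∨ ℓ = 2 * p k + 1) →
        ¬ ℓ ∣ (v + 2*(n+1-k)) ∧ ¬ ℓ ∣ (v*(2*v+1)^3 + 2*(n+1-k))) := by
    intro ℓ hℓS
    have hℓp := hSprime ℓ hℓS
    have hℓ5 := hS5 ℓ hℓS
    haveI : Fact ℓ.Prime := ⟨hℓp⟩
    have hcast : ∀ (r : ZMod ℓ), ((r.val : ℕ) : ZMod ℓ) = r := by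
      intro r; rw [ZMod.natCast_val, ZMod.cast_id]
    have hzero : ∀ m : ℕ, ¬ ℓ ∣ m ↔ ((m : ZMod ℓ) ≠ 0) := by
      intro m; rw [Ne, ZMod.natCast_eq_zero_iff]
    by_cases hsmall : ℓ ≤ H
    · obtain ⟨r, hr0, hr1, hr2, hr3⟩ := good_residue hℓp hℓ5 ((2*(n+1) : ℕ) : ZMod ℓ)
      refine ⟨r.val, ?_, ?_, fun _ => ⟨?_, ?_⟩, ?_⟩
      · rw [hzero, hcast]; exact hr0
      · rw [hzero]; push_cast; rw [hcast]; exact hr1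
      · rw [hzero]; push_cast; rw [hcast]
        intro hcon; apply hr2; rw [← hcon]; push_cast; ring
      · rw [hzero]; push_cast; rw [hcast]
        intro hcon; apply hr3; rw [← hcon]; push_cast; ring
      · intro k hk1 hk2 hor
        exfalso
        have := hbig k hk1 hk2
        rcases hor with he | he <;> omega
    · -- ℓ is p k₀ or 2 p k₀ + 1 for a unique k₀
      have : (∃ k, 1 ≤ k ∧ k ≤ n ∧ p k = ℓ) ∨ (∃ k, 1 ≤ k ∧ k ≤ n ∧ 2 * p k + 1 = ℓ) := by
        rcases (hmemS ℓ).mp hℓS with ⟨_, _, h3⟩ | h | h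
        · exact absurd h3 hsmall
        · exact Or.inl h
        · exact Or.inr h
      -- extract k₀
      have hk0 : ∃ k0, 1 ≤ k0 ∧ k0 ≤ n ∧ (ℓ = p k0 ∨ ℓ = 2 * p k0 + 1) := by
        rcases this with ⟨k, h1, h2, h3⟩ | ⟨k, h1, h2, h3⟩
        · exact ⟨k, h1, h2, Or.inl h3.symm⟩
        · exact ⟨k, h1, h2, Or.inr h3.symm⟩
      obtain ⟨k0, hk01, hk02, hk0or⟩ := hk0
      obtain ⟨r, hr0, hr1, hr2, hr3⟩ := good_residue hℓp hℓ5 ((2*(n+1-k0) : ℕ) : ZMod ℓ)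
      refine ⟨r.val, ?_, ?_, fun hle => absurd hle hsmall, ?_⟩
      · rw [hzero, hcast]; exact hr0
      · rw [hzero]; push_cast; rw [hcast]; exact hr1
      · intro k hk1 hk2 hor
        have hkk0 : k = k0 := by
          rcases hor with he | he <;> rcases hk0or with he0 | he0
          · exact (huniq1 k k0 hk1 hk2 hk01 hk02 (by omega)).symm ▸ rfl
          · exact absurd (by omega : p k = 2 * p k0 + 1) (huniq2 k k0 hk1 hk2 hk01 hk02)
          · exact absurd (by omega : p k0 = 2 * p k + 1) (huniq2 k0 k hk01 hk02 hk1 hk2)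
          · have : p k = p k0 := by omega
            exact huniq1 k k0 hk1 hk2 hk01 hk02 this
        subst hkk0
        constructor
        · rw [hzero]; push_cast; rw [hcast]
          intro hcon; apply hr2; rw [← hcon]; push_cast; ring
        · rw [hzero]; push_cast; rw [hcast]
          intro hcon; apply hr3; rw [← hcon]; push_cast; ring
  -- choose residues and apply CRT
  choose v hv using hGood
  classical
  set res : ℕ → ℕ := fun ℓ => if h : ℓ ∈ S then v ℓ h else 0 with hres
  have hres_eq : ∀ ℓ (h : ℓ ∈ S), res ℓ = v ℓ h := by
    intro ℓ h; simp [hres, h]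
  have hpair : Set.Pairwise ↑S (Function.onFun Nat.Coprime id) := by
    intro x hx y hy hxy
    simp only [Function.onFun, id]
    exact (Nat.coprime_primes (hSprime x hx) (hSprime y hy)).mpr hxy
  obtain ⟨r, hr⟩ := Nat.chineseRemainderOfFinset res id S
    (fun i hi => (hSprime i hi).pos.ne') hpair
  set M : ℕ := ∏ ℓ ∈ S, ℓ with hMdef
  have hMpos : 0 < M := Finset.prod_pos (fun i hi => (hSprime i hi).pos)
  have hdvdM : ∀ ℓ ∈ S, ℓ ∣ M := fun ℓ hℓ => Finset.dvd_prod_of_mem _ hℓ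
  have hrmod : ∀ ℓ (h : ℓ ∈ S), r ≡ v ℓ h [MOD ℓ] := by
    intro ℓ h
    have := hr ℓ h
    rwa [hres_eq ℓ h] at this
  have hcop : ∀ ℓ : ℕ, ℓ.Prime → ℓ ∣ M → ¬ ℓ ∣ r * (2*r+1) := by
    intro ℓ hℓp hℓM
    obtain ⟨a, haS, hdvd⟩ := (Nat.Prime.prime hℓp).exists_mem_finset_dvd hℓM
    have hae : ℓ = a := (Nat.prime_dvd_prime_iff_eq hℓp (hSprime a haS)).mp hdvd
    subst hae
    intro hdvdmul
    rcases (Nat.Prime.dvd_mul hℓp).mp hdvdmul with hcase | hcase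
    · exact (hv ℓ haS).1 ((Nat.ModEq.dvd_iff (hrmod ℓ haS) dvd_rfl).mp hcase)
    · have hmod2 : 2*r+1 ≡ 2*(v ℓ haS)+1 [MOD ℓ] :=
        ((hrmod ℓ haS).mul_left 2).add_right 1
      exact (hv ℓ haS).2.1 ((Nat.ModEq.dvd_iff hmod2 dvd_rfl).mp hcase)
  obtain ⟨P, hPN, hPp, hP2p, hPmod⟩ := dickson_step hD M r
    (4*H + 1 + 3 * p n * (2 * p n + 1)^3) hMpos hcop
  have hPres : ∀ ℓ (h : ℓ ∈ S), P ≡ v ℓ h [MOD ℓ] := by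
    intro ℓ h
    exact ((Nat.ModEq.of_dvd (hdvdM ℓ h) hPmod).trans (hrmod ℓ h))
  -- divisibility consequences for the new prime P
  have hPdvd : ∀ ℓ (h : ℓ ∈ S),
      (¬ ℓ ∣ P) ∧ (¬ ℓ ∣ (2*P+1)) ∧
      (ℓ ≤ H → ¬ ℓ ∣ (2*(n+1) + P) ∧ ¬ ℓ ∣ (2*(n+1) + P*(2*P+1)^3)) ∧
      (∀ k, 1 ≤ k → k ≤ n → (ℓ = p k ∨ ℓ = 2 * p k + 1) →
        ¬ ℓ ∣ (P + 2*(n+1-k)) ∧ ¬ ℓ ∣ (P*(2*P+1)^3 + 2*(n+1-k))) := by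
    intro ℓ h
    obtain ⟨g1, g2, g3, g4⟩ := hv ℓ h
    have e0 := hPres ℓ h
    have e1 : 2*P+1 ≡ 2*(v ℓ h)+1 [MOD ℓ] := (e0.mul_left 2).add_right 1
    have e2 : 2*(n+1) + P ≡ 2*(n+1) + v ℓ h [MOD ℓ] := e0.add_left _
    have ecube : P*(2*P+1)^3 ≡ (v ℓ h)*(2*(v ℓ h)+1)^3 [MOD ℓ] := e0.mul (e1.pow 3)
    have e3 : 2*(n+1) + P*(2*P+1)^3 ≡ 2*(n+1) + (v ℓ h)*(2*(v ℓ h)+1)^3 [MOD ℓ] :=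
      ecube.add_left _
    refine ⟨fun hc => g1 ((Nat.ModEq.dvd_iff e0 dvd_rfl).mp hc),
      fun hc => g2 ((Nat.ModEq.dvd_iff e1 dvd_rfl).mp hc), ?_, ?_⟩
    · intro hle
      refine ⟨fun hc => (g3 hle).1 ((Nat.ModEq.dvd_iff e2 dvd_rfl).mp hc),
        fun hc => (g3 hle).2 ((Nat.ModEq.dvd_iff e3 dvd_rfl).mp hc)⟩
    · intro k hk1 hk2 hor
      have e4 : P + 2*(n+1-k) ≡ v ℓ h + 2*(n+1-k) [MOD ℓ] := e0.add_right _
      have e5 : P*(2*P+1)^3 + 2*(n+1-k) ≡ (v ℓ h)*(2*(v ℓ h)+1)^3 + 2*(n+1-k) [MOD ℓ] :=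
        ecube.add_right _
      refine ⟨fun hc => (g4 k hk1 hk2 hor).1 ((Nat.ModEq.dvd_iff e4 dvd_rfl).mp hc),
        fun hc => (g4 k hk1 hk2 hor).2 ((Nat.ModEq.dvd_iff e5 dvd_rfl).mp hc)⟩
  -- the new sequence
  set p' : ℕ → ℕ := fun m => if m = n+1 then P else p m with hp'
  have hp'old : ∀ m, m ≠ n+1 → p' m = p m := by
    intro m hm; simp [hp', hm]
  have hp'new : p' (n+1) = P := by simp [hp']
  -- useful size facts
  have hNP : 4*H + 1 + 3 * p n * (2 * p n + 1)^3 < P := hPN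
  have hPbig : 4*H+1 < P := by omega
  have hpnP : ∀ h, 1 ≤ h → h ≤ n → p h < P := by
    intro h h1 h2
    have h3 : p h ≤ p n := hmono h n h1 h2 le_rfl
    have hX : 1 ≤ (2*p n+1)^3 := Nat.one_le_pow _ _ (by omega)
    nlinarith
  have hpn_cube : ∀ h, 1 ≤ h → h ≤ n → p h * (2 * p h + 1)^3 ≤ p n * (2 * p n + 1)^3 := by
    intro h h1 h2
    have h3 : p h ≤ p n := hmono h n h1 h2 le_rfl
    exact Nat.mul_le_mul h3 (Nat.pow_le_pow_left (by omega) 3)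
  refine ⟨p', ?_, ?_, ?_, ?_, ?_⟩
  · -- Sophie Germain
    intro h h1 h2
    rcases eq_or_ne h (n+1) with rfl | hne
    · rw [hp'new]; exact ⟨hPp, hP2p⟩
    · rw [hp'old h hne]; exact hSG h h1 (by omega)
  · -- p' 1 > 4H+1
    intro _
    rcases eq_or_ne 1 (n+1) with he | hne
    · rw [← he] at hp'new; rw [hp'new]; exact hPbig
    · rw [hp'old 1 hne]; exact hp1 (by omega)
  · -- growth
    intro h h1 h2
    rcases eq_or_ne (h+1) (n+1) with he | hne
    · have : h = n := by omega
      subst this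
      rw [hp'new, hp'old h (by omega)]
      omega
    · rw [hp'old (h+1) hne, hp'old h (by omega)]
      exact hgrow h h1 (by omega)
  · -- (ii)
    intro h h1 h2 q hq hq5 hqH
    rcases eq_or_ne h (n+1) with rfl | hne
    · rw [hp'new]
      have hqS : q ∈ S := (hmemS q).mpr (Or.inl ⟨hq, hq5, hqH⟩)
      have := (hPdvd q hqS).2.2.1 hqH
      rw [show 2*(n+1) + P = 2*(n+1) + P from rfl] at this
      exact this
    · rw [hp'old h hne]
      exact hii h h1 (by omega) q hq hq5 hqH
  · -- (iii)
    intro h k h1 h2 k1 k2 hnek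
    rcases eq_or_ne h (n+1) with rfl | hneh
    · -- h = n+1, so k ≤ n : congruence conditions
      have hk2' : k ≤ n := by omega
      rw [hp'new, hp'old k (by omega)]
      have hkS1 : p k ∈ S := (hmemS (p k)).mpr (Or.inr (Or.inl ⟨k, k1, hk2', rfl⟩))
      have hkS2 : 2*p k+1 ∈ S := (hmemS (2*p k+1)).mpr (Or.inr (Or.inr ⟨k, k1, hk2', rfl⟩))
      have d1 := (hPdvd (p k) hkS1).2.2.2 k k1 hk2' (Or.inl rfl)
      have d2 := (hPdvd (2*p k+1) hkS2).2.2.2 k k1 hk2' (Or.inr rfl)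
      have hcast1 : ((P : ℤ) - 2 * ((k : ℤ) - ((n+1 : ℕ) : ℤ))) = ((P + 2*(n+1-k) : ℕ) : ℤ) := by
        push_cast [Nat.sub_add_cancel]
        omega
      have hAZ : ((P * (2*P+1)^3 : ℕ) : ℤ) = (P : ℤ) * (2 * (P : ℤ) + 1)^3 := by
        push_cast; ring
      have hcast2 : ((P : ℤ) * (2 * (P : ℤ) + 1) ^ 3 - 2 * ((k : ℤ) - ((n+1 : ℕ) : ℤ)))
          = ((P*(2*P+1)^3 + 2*(n+1-k) : ℕ) : ℤ) := by
        rw [← hAZ]; omega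
      have hfac : ((p k : ℤ) * (2 * (p k : ℤ) + 1)) = ((p k : ℤ) * ((2*p k+1 : ℕ) : ℤ)) := by
        push_cast; ring
      constructor
      · rw [hcast1, hfac]
        exact int_gcd_prime_mul (hSG k k1 hk2').1 (hSG k k1 hk2').2 _
          (fun hc => d1.1 (Int.natCast_dvd_natCast.mp hc))
          (fun hc => d2.1 (Int.natCast_dvd_natCast.mp hc))
      · rw [hcast2, hfac]
        exact int_gcd_prime_mul (hSG k k1 hk2').1 (hSG k k1 hk2').2 _
          (fun hc => d1.2 (Int.natCast_dvd_natCast.mp hc))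
          (fun hc => d2.2 (Int.natCast_dvd_natCast.mp hc))
    · rcases eq_or_ne k (n+1) with rfl | hnek'
      · -- k = n+1 : size conditions
        have h2' : h ≤ n := by omega
        rw [hp'new, hp'old h hneh]
        have hbig_h : 4*H+1 < p h := hbig h h1 h2'
        have hsub : 2*(n+1-h) ≤ 2*H := by omega
        -- first value
        have hA1pos : 0 < p h - 2*(n+1-h) := by omega
        have hA1lt : p h - 2*(n+1-h) < P := by
          have := hpnP h h1 h2'; omega
        have hA2pos : 0 < p h * (2*p h+1)^3 - 2*(n+1-h) := by
          have hX : p h ≤ p h * (2*p h+1)^3 := by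
            have : 1 ≤ (2*p h+1)^3 := Nat.one_le_pow _ _ (by omega)
            nlinarith
          omega
        have hA2lt : p h * (2*p h+1)^3 - 2*(n+1-h) < P := by
          have := hpn_cube h h1 h2'
          have hexp : 3 * (p n * (2*p n+1)^3) = 3 * p n * (2*p n+1)^3 := by ring
          omega
        have hcast1 : ((p h : ℤ) - 2 * (((n+1 : ℕ) : ℤ) - (h : ℤ)))
            = ((p h - 2*(n+1-h) : ℕ) : ℤ) := by
          push_cast
          omega
        have hAZ : ((p h * (2*p h+1)^3 : ℕ) : ℤ) = (p h : ℤ) * (2 * (p h : ℤ) + 1)^3 := by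
          push_cast; ring
        have hcast2 : ((p h : ℤ) * (2 * (p h : ℤ) + 1) ^ 3 - 2 * (((n+1 : ℕ) : ℤ) - (h : ℤ)))
            = ((p h * (2*p h+1)^3 - 2*(n+1-h) : ℕ) : ℤ) := by
          rw [← hAZ]; omega
        have hfac : ((P : ℤ) * (2 * (P : ℤ) + 1)) = ((P : ℤ) * ((2*P+1 : ℕ) : ℤ)) := by
          push_cast; ring
        constructor
        · rw [hcast1, hfac]
          exact int_gcd_prime_mul hPp hP2p _
            (fun hc => not_dvd_of_lt' hA1pos hA1lt (Int.natCast_dvd_natCast.mp hc))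
            (fun hc => not_dvd_of_lt' hA1pos (by omega) (Int.natCast_dvd_natCast.mp hc))
        · rw [hcast2, hfac]
          exact int_gcd_prime_mul hPp hP2p _
            (fun hc => not_dvd_of_lt' hA2pos hA2lt (Int.natCast_dvd_natCast.mp hc))
            (fun hc => not_dvd_of_lt' hA2pos (by omega) (Int.natCast_dvd_natCast.mp hc))
      · -- both old
        rw [hp'old h hneh, hp'old k hnek']
        exact hiii h k h1 (by omega) k1 (by omega) hnek

lemma germinv_zero (H : ℕ) : GermInv H 0 (fun _ => 0) := by
  refine ⟨?_, ?_, ?_, ?_, ?_⟩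
  · intro h h1 h2; omega
  · intro h; omega
  · intro h h1 h2; omega
  · intro h h1 h2; omega
  · intro h k h1 h2; omega

lemma germinv_exists (hD : DicksonConjecture) (H : ℕ) (hH : 5 ≤ H) :
    ∀ n, n ≤ H → ∃ p, GermInv H n p := by
  intro n
  induction n with
  | zero => exact fun _ => ⟨fun _ => 0, germinv_zero H⟩
  | succ m ih =>
    intro hm
    obtain ⟨p, hp⟩ := ih (by omega)
    exact inv_step hD H m hH hm p hp

/-- Assuming Dickson's conjecture, for every `H ≥ 5` there exist Sophie Germain primes
`p 1, …, p H` satisfying the size conditions (i) and the coprimality conditions (ii),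
(iii) of Proposition 1. -/
theorem exists_family_germain_primes (hD : DicksonConjecture) (H : ℕ) (hH : 5 ≤ H) :
    ∃ p : ℕ → ℕ,
      -- Sophie Germain primes
      (∀ h, 1 ≤ h → h ≤ H → (p h).Prime ∧ (2 * p h + 1).Prime) ∧
      -- (i) size conditions
      4 * H + 1 < p 1 ∧
      (∀ h, 1 ≤ h → h ≤ H - 1 → 3 * p h * (2 * p h + 1) ^ 3 < p (h + 1)) ∧
      -- (ii) coprimality with small primes
      (∀ h, 1 ≤ h → h ≤ H → ∀ q : ℕ, q.Prime → 5 ≤ q → q ≤ H →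
        Nat.gcd (2 * h + p h) q = 1 ∧
        Nat.gcd (2 * h + p h * (2 * p h + 1) ^ 3) q = 1) ∧
      -- (iii) cross coprimality conditions
      (∀ h k, 1 ≤ h → h ≤ H → 1 ≤ k → k ≤ H → h ≠ k →
        Int.gcd ((p h : ℤ) - 2 * ((k : ℤ) - (h : ℤ))) ((p k : ℤ) * (2 * (p k : ℤ) + 1)) = 1 ∧
        Int.gcd ((p h : ℤ) * (2 * (p h : ℤ) + 1) ^ 3 - 2 * ((k : ℤ) - (h : ℤ)))
          ((p k : ℤ) * (2 * (p k : ℤ) + 1)) = 1) := by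
  obtain ⟨p, hSG, hp1, hgrow, hii, hiii⟩ := germinv_exists hD H hH H le_rfl
  refine ⟨p, hSG, hp1 (by omega), ?_, ?_, hiii⟩
  · intro h h1 h2
    exact hgrow h h1 (by omega)
  · intro h h1 h2 q hq hq5 hqH
    obtain ⟨d1, d2⟩ := hii h h1 h2 q hq hq5 hqH
    exact ⟨((hq.coprime_iff_not_dvd).mpr d1).symm, ((hq.coprime_iff_not_dvd).mpr d2).symm⟩
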